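/- For a TU cost game (N,c) with empty core, the constraint x(N) ≤ c(N) is implied by the constraints x(S) ≤ c(S) for all proper S ⊊ N; that is, the almost core AC(N,c) equals the polyhedron P(N,c) = { x : x(S) ≤ c(S) for all S ⊆ N }. -/
import Mathlib


open Finset

/-- For a TU cost game with empty core, the almost core equals P(N,c): the
constraint x(N) ≤ c(N) is implied by the proper-coalition constraints. -/
theorem empty_core_almost_core_eq_P {n : ℕ} (c : Finset (Fin n) → ℝ)
    (hc : ∀ S, 0 ≤ c S) (m : ℝ)
    (hm : IsGreatest {v : ℝ | ∃ x : Fin n → ℝ,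
      (∀ S : Finset (Fin n), S ⊂ univ → ∑ i ∈ S, x i ≤ c S) ∧ v = ∑ i, x i} m)
    (hempty : ¬ ∃ x : Fin n → ℝ,
      (∀ S : Finset (Fin n), S ⊂ univ → ∑ i ∈ S, x i ≤ c S) ∧
      ∑ i, x i = c univ) :
    ∀ x : Fin n → ℝ,
      (∀ S : Finset (Fin n), S ⊂ univ → ∑ i ∈ S, x i ≤ c S) ↔
      (∀ S : Finset (Fin n), ∑ i ∈ S, x i ≤ c S) := by
  intro x
  constructor
  · intro hx S
    rcases eq_or_ne S univ with rfl | hS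
    · -- need ∑ x ≤ c univ
      rcases Nat.eq_zero_or_pos n with hn | hn
      · subst hn
        simp only [Finset.univ_eq_empty, Finset.sum_empty]
        exact hc _
      · -- show m < c univ
        have hmlt : m < c univ := by
          by_contra h
          push_neg at h
          obtain ⟨x0, hx0, hx0m⟩ := hm.1
          set i0 : Fin n := ⟨0, hn⟩
          refine hempty ⟨fun i => if i = i0 then x0 i - (m - c univ) else x0 i, ?_, ?_⟩
          · intro S hSu
            refine le_trans (Finset.sum_le_sum fun i _ => ?_) (hx0 S hSu)
            by_cases hi : i = i0 <;> simp [hi] <;> linarith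
          · have : ∑ i, (if i = i0 then x0 i - (m - c univ) else x0 i)
                = (∑ i, x0 i) - (m - c univ) := by
              have heq : ∀ i, (if i = i0 then x0 i - (m - c univ) else x0 i)
                  = x0 i - (if i = i0 then (m - c univ) else 0) := by
                intro i; split <;> simp
              simp only [heq]
              rw [Finset.sum_sub_distrib, Finset.sum_ite_eq' univ i0 (fun _ => m - c univ)]
              simp
            rw [this, ← hx0m]
            ring
        have hxm : ∑ i, x i ≤ m := hm.2 ⟨x, hx, rfl⟩
        linarith
    · exact hx S (lt_of_le_of_ne (Finset.subset_univ S) hS)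
  · intro hx S _
    exact hx S
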